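/- Let A = U·diag(λ)·Uᴴ be an N×N Hermitian complex matrix with U unitary and λ : Fin N → ℝ, let ω be real, set X₀ = ωA, and define the Hotelling–Bodewig iterates X_t = 2X_{t−1} − X_{t−1}·A·X_{t−1}. Then for every t ≥ 0, the squared Frobenius norm of the residual satisfies ‖I − A·X_t‖_F² = Σ_{n=0}^{N−1} (1 − ωλₙ²)^{2^{t+1}}. -/

import Mathlib

open Matrix

attribute [local instance] Matrix.frobeniusNormedAddCommGroup

/-- Frobenius norm squared equals the real part of `trace (M * Mᴴ)`. -/
lemma frob_sq_eq_trace {N : ℕ} (M : Matrix (Fin N) (Fin N) ℂ) :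
    ‖M‖ ^ 2 = (Matrix.trace (M * Mᴴ)).re := by
  have h := Matrix.frobenius_norm_def M
  have hsum : ∑ i, ∑ j, ‖M i j‖ ^ (2 : ℝ) = ∑ i, ∑ j, ‖M i j‖ ^ (2 : ℕ) := by
    refine Finset.sum_congr rfl fun i _ => Finset.sum_congr rfl fun j _ => ?_
    rw [← Real.rpow_natCast]; norm_num
  have hnn : (0:ℝ) ≤ ∑ i, ∑ j, ‖M i j‖ ^ (2:ℕ) :=
    Finset.sum_nonneg fun i _ => Finset.sum_nonneg fun j _ => by positivity
  have hMsq : ‖M‖ ^ 2 = ∑ i, ∑ j, ‖M i j‖ ^ (2:ℕ) := by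
    rw [h, hsum, ← Real.sqrt_eq_rpow, Real.sq_sqrt hnn]
  rw [hMsq, Matrix.trace, Complex.re_sum]
  refine Finset.sum_congr rfl fun i _ => ?_
  simp only [Matrix.diag_apply, Matrix.mul_apply, Matrix.conjTranspose_apply,
    Complex.re_sum]
  refine Finset.sum_congr rfl fun j _ => ?_
  rw [show star (M i j) = (starRingEnd ℂ) (M i j) from rfl, Complex.mul_conj,
    Complex.ofReal_re, Complex.normSq_eq_norm_sq]

theorem hotelling_bodewig_residual_frobenius
    (N : ℕ)
    (U : Matrix (Fin N) (Fin N) ℂ) (hU : U ∈ Matrix.unitaryGroup (Fin N) ℂ)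
    (lam : Fin N → ℝ) (ω : ℝ)
    (A : Matrix (Fin N) (Fin N) ℂ)
    (hA : A = U * Matrix.diagonal (fun n => (lam n : ℂ)) * Uᴴ)
    (X : ℕ → Matrix (Fin N) (Fin N) ℂ)
    (hX0 : X 0 = (ω : ℂ) • A)
    (hX : ∀ t : ℕ, X (t + 1) = 2 • X t - X t * A * X t) :
    ∀ t : ℕ, ‖(1 : Matrix (Fin N) (Fin N) ℂ) - A * X t‖ ^ 2
      = ∑ n : Fin N, (1 - ω * lam n ^ 2) ^ (2 ^ (t + 1)) := by
  have hUU : Uᴴ * U = 1 := hU.1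
  have hUU' : U * Uᴴ = 1 := hU.2
  set d : ℕ → Fin N → ℂ := fun t n => ((1 - ω * lam n ^ 2 : ℝ) : ℂ) ^ (2 ^ t) with hd
  have hconj : ∀ (D E : Matrix (Fin N) (Fin N) ℂ),
      (U * D * Uᴴ) * (U * E * Uᴴ) = U * (D * E) * Uᴴ := by
    intro D E
    calc (U * D * Uᴴ) * (U * E * Uᴴ) = U * D * (Uᴴ * U) * E * Uᴴ := by
          simp only [Matrix.mul_assoc]
      _ = U * (D * E) * Uᴴ := by rw [hUU]; simp only [Matrix.mul_one, Matrix.mul_assoc]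
  have hsub : ∀ D : Matrix (Fin N) (Fin N) ℂ,
      (1 : Matrix (Fin N) (Fin N) ℂ) - U * D * Uᴴ = U * (1 - D) * Uᴴ := by
    intro D
    rw [Matrix.mul_sub, Matrix.mul_one, Matrix.sub_mul, hUU']
  have hsmul : ∀ (c : ℂ) (D : Matrix (Fin N) (Fin N) ℂ),
      c • (U * D * Uᴴ) = U * (c • D) * Uᴴ := by
    intro c D
    rw [Matrix.mul_smul, Matrix.smul_mul]
  have key : ∀ t : ℕ, (1 : Matrix (Fin N) (Fin N) ℂ) - A * X t
      = U * Matrix.diagonal (d t) * Uᴴ := by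
    intro t
    induction t with
    | zero =>
      have hAA : A * A = U * Matrix.diagonal (fun n => (lam n : ℂ) ^ 2) * Uᴴ := by
        rw [hA, hconj]
        congr 2
        rw [Matrix.diagonal_mul_diagonal]
        congr 1; funext n; ring
      rw [hX0, Matrix.mul_smul, hAA, hsmul, hsub]
      have hD : (1 : Matrix (Fin N) (Fin N) ℂ)
          - (ω:ℂ) • Matrix.diagonal (fun n => (lam n : ℂ) ^ 2)
          = Matrix.diagonal (d 0) := by
        rw [← Matrix.diagonal_smul, ← Matrix.diagonal_one, Matrix.diagonal_sub]
        congr 1; funext n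
        simp only [hd, pow_zero, pow_one, Pi.sub_apply, Pi.one_apply, Pi.smul_apply,
          smul_eq_mul]
        push_cast
        ring
      rw [hD]
    | succ t ih =>
      have hM : A * X (t + 1) = 2 • (A * X t) - (A * X t) * (A * X t) := by
        rw [hX t, Matrix.mul_sub, Matrix.mul_smul]
        congr 1
        simp only [Matrix.mul_assoc]
      have hsq : (1 : Matrix (Fin N) (Fin N) ℂ) - A * X (t+1)
          = ((1 : Matrix (Fin N) (Fin N) ℂ) - A * X t) * (1 - A * X t) := by
        rw [hM]
        set M := A * X t
        have h2 : (2:ℕ) • M = M + M := two_nsmul M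
        rw [h2]
        noncomm_ring
      rw [hsq, ih, hconj, Matrix.diagonal_mul_diagonal]
      have hD : (fun i => d t i * d t i) = d (t + 1) := by
        funext n
        simp only [hd]
        rw [← pow_add]
        congr 1
        omega
      rw [hD]
  intro t
  rw [key t, frob_sq_eq_trace]
  have hH : (U * Matrix.diagonal (d t) * Uᴴ)ᴴ
      = U * Matrix.diagonal (star (d t)) * Uᴴ := by
    simp [Matrix.conjTranspose_mul, Matrix.diagonal_conjTranspose, Matrix.mul_assoc]
  rw [hH, hconj, Matrix.diagonal_mul_diagonal]
  rw [Matrix.trace_mul_comm, ← Matrix.mul_assoc, hUU, Matrix.one_mul]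
  rw [Matrix.trace_diagonal, Complex.re_sum]
  refine Finset.sum_congr rfl fun n _ => ?_
  simp only [hd, Pi.star_apply, ← Complex.ofReal_pow, Complex.star_def,
    Complex.conj_ofReal, ← Complex.ofReal_mul, Complex.ofReal_re, ← pow_add]
  congr 1
  omega
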